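/- Let m ≥ 3 and let A ≥ 0, B be integers with 12A + 6B - B² ≥ 0 and such that 12A + 6B - B² ≠ 4^l(8k+7) for all nonnegative integers l, k. Then there exist integers x₁, x₂, x₃, x₄ with P_m(x₁) + P_m(x₂) + 2P_m(x₃) + 2P_m(x₄) = A(m-2) + B. -/

import Mathlib

/-- The generalized `m`-gonal number `P_m(x) = ((m-2)x² - (m-4)x)/2`. -/
def polygonal (m x : ℤ) : ℤ := ((m - 2) * x ^ 2 - (m - 4) * x) / 2


/-- rounding: we can shift `d` by a multiple of `a` to land in `[-a/2, a/2]`. -/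
lemma round_helper (a d : ℤ) (ha : 0 < a) : ∃ t r : ℤ, a * t + d = r ∧ 2 * (r.natAbs : ℤ) ≤ a := by
  have h1 : 0 ≤ d % a := Int.emod_nonneg d ha.ne'
  have h2 : d % a < a := Int.emod_lt_of_pos d ha
  by_cases h : 2 * (d % a) ≤ a
  · refine ⟨-(d / a), d % a, by rw [Int.emod_def]; ring, ?_⟩
    rw [Int.natAbs_of_nonneg h1]; exact h
  · refine ⟨-(d / a) - 1, d % a - a, by rw [Int.emod_def]; ring, ?_⟩
    have : (d % a - a).natAbs = a - d % a := by
      rw [← Int.natAbs_neg]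
      have h3 : -(d % a - a) = a - d % a := by ring
      rw [h3, Int.natAbs_of_nonneg (by omega)]
    omega

/-- binary quadratic form -/
def bqf (A B C x y : ℤ) : ℤ := A*x^2 + 2*B*x*y + C*y^2

lemma binred : ∀ (N : ℕ) (A B C : ℤ), B.natAbs ≤ N → 0 < A → 0 < A*C - B^2 →
    ∃ x y u v : ℤ, x*v - y*u = 1 ∧ 3 * (bqf A B C x y)^2 ≤ 4*(A*C - B^2) := by
  intro N
  induction N with
  | zero =>
    intro A B C hB hA hD
    have hB0 : B = 0 := by omega
    subst hB0
    have hC : 0 < C := by nlinarith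
    rcases le_or_gt A C with h | h
    · refine ⟨1, 0, 0, 1, by ring, ?_⟩
      have : bqf A 0 C 1 0 = A := by simp [bqf]
      rw [this]; nlinarith
    · refine ⟨0, 1, -1, 0, by ring, ?_⟩
      have : bqf A 0 C 0 1 = C := by simp [bqf]
      rw [this]; nlinarith
  | succ N ih =>
    intro A B C hB hA hD
    have hC : 0 < C := by nlinarith [sq_nonneg B]
    by_cases h1 : 2 * (B.natAbs : ℤ) ≤ A ∧ A ≤ C
    · refine ⟨1, 0, 0, 1, by ring, ?_⟩
      have hv : bqf A B C 1 0 = A := by simp [bqf]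
      rw [hv]
      have hb2 : 4 * B^2 ≤ A^2 := by nlinarith [Int.natAbs_sq B, sq_nonneg ((B.natAbs : ℤ))]
      nlinarith
    · by_cases h2 : 2 * (B.natAbs : ℤ) ≤ C ∧ C ≤ A
      · refine ⟨0, 1, -1, 0, by ring, ?_⟩
        have hv : bqf A B C 0 1 = C := by simp [bqf]
        rw [hv]
        have hb2 : 4 * B^2 ≤ C^2 := by nlinarith [Int.natAbs_sq B, sq_nonneg ((B.natAbs : ℤ))]
        nlinarith
      · rcases le_or_gt A C with hAC | hAC
        · -- here 2|B| > A
          have hBA : A < 2 * (B.natAbs : ℤ) := by omega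
          obtain ⟨t, r, htr, hr⟩ := round_helper A B hA
          have hrB : r.natAbs ≤ N := by omega
          set C' := A*t^2 + 2*B*t + C with hC'
          have hD' : A*C' - r^2 = A*C - B^2 := by rw [hC', ← htr]; ring
          obtain ⟨x', y', u', v', hdet, hval⟩ := ih A r C' hrB hA (by omega)
          refine ⟨x' + t*y', y', u' + t*v', v', by linear_combination hdet, ?_⟩
          have hv : bqf A B C (x' + t*y') y' = bqf A r C' x' y' := by
            simp only [bqf, hC', ← htr]; ring
          rw [hv]; omega
        · -- here C < A and 2|B| > C
          have hBC : C < 2 * (B.natAbs : ℤ) := by omega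
          obtain ⟨t, r, htr, hr⟩ := round_helper C B hC
          have hrB : r.natAbs ≤ N := by omega
          set A' := A + 2*B*t + C*t^2 with hA'
          have hD' : C*A' - r^2 = A*C - B^2 := by rw [hA', ← htr]; ring
          obtain ⟨x', y', u', v', hdet, hval⟩ := ih C r A' hrB hC (by omega)
          refine ⟨y', x' + t*y', -v', -(u' + t*v'), by linear_combination hdet, ?_⟩
          have hv : bqf A B C y' (x' + t*y') = bqf C r A' x' y' := by
            simp only [bqf, hA', ← htr]; ring
          rw [hv]; omega

/-- a positive binary form of determinant 1 is a sum of two squares of linear forms. -/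
lemma bin_sum2 (A B C : ℤ) (hA : 0 < A) (hdet : A*C - B^2 = 1) :
    ∀ x y : ℤ, ∃ s t : ℤ, bqf A B C x y = s^2 + t^2 := by
  obtain ⟨x₀, y₀, u₀, v₀, hdet₀, hval⟩ := binred B.natAbs A B C le_rfl hA (by omega)
  set g := bqf A B C x₀ y₀ with hg
  have hApos : A * g = (A*x₀ + B*y₀)^2 + y₀^2 := by
    simp only [hg, bqf]; linear_combination y₀^2 * hdet
  have hg1 : g = 1 := by
    rcases le_or_gt g 0 with h | h
    · exfalso
      have hy : y₀ = 0 := by nlinarith [sq_nonneg (A*x₀ + B*y₀), sq_nonneg y₀]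
      have hx : A*x₀ + B*y₀ = 0 := by nlinarith [sq_nonneg (A*x₀ + B*y₀), sq_nonneg y₀]
      rw [hy] at hx
      have : x₀ = 0 := by
        rcases mul_eq_zero.mp (by linarith [hx] : A * x₀ = 0) with h' | h'
        · omega
        · exact h'
      rw [this, hy] at hdet₀; simp at hdet₀
    · rw [hdet] at hval; nlinarith
  -- transformed coefficients
  set B₁ := A*x₀*u₀ + B*(x₀*v₀ + y₀*u₀) + C*y₀*v₀ with hB₁
  set C₁ := bqf A B C u₀ v₀ with hC₁
  have htr : ∀ X Y : ℤ, bqf g B₁ C₁ X Y = bqf A B C (x₀*X + u₀*Y) (y₀*X + v₀*Y) := by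
    intro X Y; simp only [bqf, hg, hB₁, hC₁]; ring
  have hdet₁ : g*C₁ - B₁^2 = 1 := by
    have : g*C₁ - B₁^2 = (x₀*v₀ - y₀*u₀)^2 * (A*C - B^2) := by
      simp only [hg, hB₁, hC₁, bqf]; ring
    rw [this, hdet₀, hdet]; ring
  intro x y
  refine ⟨(v₀*x - u₀*y) + B₁*(-y₀*x + x₀*y), -y₀*x + x₀*y, ?_⟩
  have hxy : bqf A B C x y = bqf g B₁ C₁ (v₀*x - u₀*y) (-y₀*x + x₀*y) := by
    rw [htr]
    have e1 : x₀*(v₀*x - u₀*y) + u₀*(-y₀*x + x₀*y) = (x₀*v₀ - y₀*u₀)*x := by ring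
    have e2 : y₀*(v₀*x - u₀*y) + v₀*(-y₀*x + x₀*y) = (x₀*v₀ - y₀*u₀)*y := by ring
    rw [e1, e2, hdet₀, one_mul, one_mul]
  rw [hxy]
  have hC₁' : C₁ = B₁^2 + 1 := by rw [hg1] at hdet₁; omega
  simp only [bqf, hg1, hC₁']; ring

def qf (a b c d e f x y z : ℤ) : ℤ := a*x^2 + b*y^2 + c*z^2 + 2*(d*x*y + e*x*z + f*y*z)
def disc (a b c d e f : ℤ) : ℤ := a*b*c + 2*d*e*f - a*f^2 - b*e^2 - c*d^2
def pol (a b c d e f u1 u2 u3 v1 v2 v3 : ℤ) : ℤ :=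
  a*u1*v1 + b*u2*v2 + c*u3*v3 + d*(u1*v2 + u2*v1) + e*(u1*v3 + u3*v1) + f*(u2*v3 + u3*v2)

set_option maxHeartbeats 2000000 in
lemma transform_disc (a b c d e f p1 p2 p3 q1 q2 q3 r1 r2 r3 : ℤ) :
    disc (qf a b c d e f p1 p2 p3) (qf a b c d e f q1 q2 q3) (qf a b c d e f r1 r2 r3)
      (pol a b c d e f p1 p2 p3 q1 q2 q3) (pol a b c d e f p1 p2 p3 r1 r2 r3)
      (pol a b c d e f q1 q2 q3 r1 r2 r3)
    = (p1*(q2*r3 - q3*r2) - q1*(p2*r3 - p3*r2) + r1*(p2*q3 - p3*q2))^2 * disc a b c d e f := by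
  simp only [disc, qf, pol]; ring

lemma transform_qf (a b c d e f p1 p2 p3 q1 q2 q3 r1 r2 r3 X Y Z : ℤ) :
    qf (qf a b c d e f p1 p2 p3) (qf a b c d e f q1 q2 q3) (qf a b c d e f r1 r2 r3)
      (pol a b c d e f p1 p2 p3 q1 q2 q3) (pol a b c d e f p1 p2 p3 r1 r2 r3)
      (pol a b c d e f q1 q2 q3 r1 r2 r3) X Y Z
    = qf a b c d e f (p1*X + q1*Y + r1*Z) (p2*X + q2*Y + r2*Z) (p3*X + q3*Y + r3*Z) := by
  simp only [qf, pol]; ring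

lemma sqpos (z : ℤ) (h : z ≠ 0) : 0 < z^2 := by
  rcases h.lt_or_gt with h | h <;> nlinarith

lemma qf_complement (a b c d e f x y z : ℤ) :
    a * qf a b c d e f x y z
      = (a*x + d*y + e*z)^2 + bqf (a*b - d^2) (a*f - d*e) (a*c - e^2) y z := by
  simp only [qf, bqf]; ring

lemma bqf_pos (A B C y z : ℤ) (hA : 0 < A) (hD : 0 < A*C - B^2) (h : ¬(y = 0 ∧ z = 0)) :
    0 < bqf A B C y z := by
  have key : A * bqf A B C y z = (A*y + B*z)^2 + (A*C - B^2)*z^2 := by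
    simp only [bqf]; ring
  have hpos : 0 < A * bqf A B C y z := by
    rcases eq_or_ne z 0 with hz | hz
    · have hy : y ≠ 0 := by tauto
      have : A*y + B*z ≠ 0 := by rw [hz]; simpa using mul_ne_zero hA.ne' hy
      rw [key]
      have := sqpos _ this
      nlinarith [sq_nonneg z]
    · rw [key]
      have h1 := sqpos z hz
      nlinarith [sq_nonneg (A*y + B*z)]
  rcases mul_pos_iff.mp hpos with ⟨_, h2⟩ | ⟨h1, _⟩
  · exact h2
  · exact absurd hA (by omega)

lemma tern_main : ∀ (N : ℕ) (a b c d e f : ℤ), a.natAbs ≤ N → disc a b c d e f = 1 →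
    (∀ x y z : ℤ, ¬(x = 0 ∧ y = 0 ∧ z = 0) → 0 < qf a b c d e f x y z) →
    ∀ x y z : ℤ, ∃ r s t : ℤ, qf a b c d e f x y z = r^2 + s^2 + t^2 := by
  intro N
  induction N with
  | zero =>
    intro a b c d e f haN _ hpos
    exfalso
    have h := hpos 1 0 0 (by simp)
    have hq : qf a b c d e f 1 0 0 = a := by simp [qf]
    rw [hq] at h; omega
  | succ N ih =>
    intro a b c d e f haN hdisc hpos
    have ha : 0 < a := by
      have h := hpos 1 0 0 (by simp)
      have hq : qf a b c d e f 1 0 0 = a := by simp [qf]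
      rwa [hq] at h
    by_cases ha1 : a = 1
    · -- split off a square directly
      subst ha1
      have hgdet : (b - d^2)*(c - e^2) - (f - d*e)^2 = 1 := by
        have : (b - d^2)*(c - e^2) - (f - d*e)^2 = disc 1 b c d e f := by
          simp only [disc]; ring
        rw [this, hdisc]
      have hA2 : 0 < b - d^2 := by
        have h := hpos (-d) 1 0 (by simp)
        have hq : qf 1 b c d e f (-d) 1 0 = b - d^2 := by simp only [qf]; ring
        rwa [hq] at h
      intro x y z
      obtain ⟨s, t, hst⟩ := bin_sum2 _ _ _ hA2 hgdet y z
      refine ⟨x + d*y + e*z, s, t, ?_⟩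
      have key := qf_complement 1 b c d e f x y z
      simp only [one_mul] at key
      rw [key, hst]; ring
    have ha2 : 2 ≤ a := by omega
    set A' := a*b - d^2 with hA'def
    set B' := a*f - d*e with hB'def
    set C' := a*c - e^2 with hC'def
    have hdet' : A'*C' - B'^2 = a := by
      have : A'*C' - B'^2 = a * disc a b c d e f := by
        simp only [hA'def, hB'def, hC'def, disc]; ring
      rw [this, hdisc, mul_one]
    obtain ⟨Y, Z, P, V, huni, hglt⟩ :
        ∃ Y Z P V : ℤ, Y*V - Z*P = 1 ∧ 4 * bqf A' B' C' Y Z < 3*a^2 := by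
      by_cases hA' : 0 < A'
      · obtain ⟨Y, Z, P, V, h1, h2⟩ := binred B'.natAbs A' B' C' le_rfl hA' (by omega)
        refine ⟨Y, Z, P, V, h1, ?_⟩
        rw [hdet'] at h2
        have hYZ : ¬(Y = 0 ∧ Z = 0) := by
          rintro ⟨rfl, rfl⟩; simp at h1
        have hgpos := bqf_pos A' B' C' Y Z hA' (by omega) hYZ
        set g := bqf A' B' C' Y Z
        have hgg : g ≤ g^2 := by nlinarith
        have h16 : 16*a < 9*a^2 := by nlinarith
        linarith
      · refine ⟨1, 0, 0, 1, by ring, ?_⟩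
        have : bqf A' B' C' 1 0 = A' := by simp [bqf]
        rw [this]; nlinarith
    obtain ⟨x₀, r, htr, hrb⟩ := round_helper a (d*Y + e*Z) ha
    have hYZ : ¬(Y = 0 ∧ Z = 0) := by
      rintro ⟨rfl, rfl⟩; simp at huni
    have hkey : a * qf a b c d e f x₀ Y Z = r^2 + bqf A' B' C' Y Z := by
      rw [qf_complement, ← hA'def, ← hB'def, ← hC'def]
      have hl : a*x₀ + d*Y + e*Z = r := by linarith
      rw [hl]
    have hQpos : 0 < qf a b c d e f x₀ Y Z := hpos _ _ _ (by tauto)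
    have hQlt : qf a b c d e f x₀ Y Z < a := by
      have hr2 : 4*r^2 ≤ a^2 := by nlinarith [Int.natAbs_sq r, sq_nonneg ((r.natAbs : ℤ))]
      nlinarith
    -- change of basis with columns (x₀,Y,Z), (-1,0,0), (0,P,V)
    set a₂ := qf a b c d e f x₀ Y Z with ha₂
    set b₂ := qf a b c d e f (-1) 0 0 with hb₂
    set c₂ := qf a b c d e f 0 P V with hc₂
    set d₂ := pol a b c d e f x₀ Y Z (-1) 0 0 with hd₂
    set e₂ := pol a b c d e f x₀ Y Z 0 P V with he₂
    set f₂ := pol a b c d e f (-1) 0 0 0 P V with hf₂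
    have htrans : ∀ X Y' Z' : ℤ, qf a₂ b₂ c₂ d₂ e₂ f₂ X Y' Z'
        = qf a b c d e f (x₀*X - Y') (Y*X + P*Z') (Z*X + V*Z') := by
      intro X Y' Z'
      have h := transform_qf a b c d e f x₀ Y Z (-1) 0 0 0 P V X Y' Z'
      rw [ha₂, hb₂, hc₂, hd₂, he₂, hf₂, h]
      ring_nf
    have hdisc₂ : disc a₂ b₂ c₂ d₂ e₂ f₂ = 1 := by
      have h := transform_disc a b c d e f x₀ Y Z (-1) 0 0 0 P V
      rw [ha₂, hb₂, hc₂, hd₂, he₂, hf₂, h, hdisc]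
      linear_combination (x₀*(0*V - 0*P) - (-1)*(Y*V - Z*P) + 0*(Y*0 - Z*0) + 1) * huni
    have hpos₂ : ∀ X Y' Z' : ℤ, ¬(X = 0 ∧ Y' = 0 ∧ Z' = 0) →
        0 < qf a₂ b₂ c₂ d₂ e₂ f₂ X Y' Z' := by
      intro X Y' Z' hne
      rw [htrans]
      apply hpos
      rintro ⟨h1, h2, h3⟩
      have hX : X = 0 := by linear_combination V*h2 - P*h3 - X*huni
      have hZ' : Z' = 0 := by
        rw [hX] at h2 h3
        linear_combination Y*h3 - Z*h2 - Z'*huni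
      have hY' : Y' = 0 := by rw [hX] at h1; linarith
      exact hne ⟨hX, hY', hZ'⟩
    have hle : a₂.natAbs ≤ N := by omega
    have hrep := ih a₂ b₂ c₂ d₂ e₂ f₂ hle hdisc₂ hpos₂
    intro x y z
    obtain ⟨r1, s1, t1, hval⟩ := hrep (V*y - P*z) (x₀*(V*y - P*z) - x) (-Z*y + Y*z)
    refine ⟨r1, s1, t1, ?_⟩
    rw [← hval, htrans]
    have e1 : x₀*(V*y - P*z) - (x₀*(V*y - P*z) - x) = x := by ring
    have e2 : Y*(V*y - P*z) + P*(-Z*y + Y*z) = y := by linear_combination y*huni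
    have e3 : Z*(V*y - P*z) + V*(-Z*y + Y*z) = z := by linear_combination z*huni
    rw [e1, e2, e3]

lemma tern_rep (a b c d e f : ℤ) (hdisc : disc a b c d e f = 1)
    (hpos : ∀ x y z : ℤ, ¬(x = 0 ∧ y = 0 ∧ z = 0) → 0 < qf a b c d e f x y z) :
    ∀ x y z : ℤ, ∃ r s t : ℤ, qf a b c d e f x y z = r^2 + s^2 + t^2 :=
  tern_main a.natAbs a b c d e f le_rfl hdisc hpos

/-- Given suitable auxiliary integers, `n` is a sum of three squares. -/
lemma form_rep (n : ℕ) (aa b δ d : ℤ) (h1 : aa*d - b^2 = δ) (h2 : (n:ℤ)*δ - aa = 1)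
    (hδ : 0 < δ) (haa : 0 < aa) : ∃ r s t : ℤ, (n:ℤ) = r^2 + s^2 + t^2 := by
  have hd : 0 < d := by nlinarith [sq_nonneg b]
  have hdisc : disc d aa n (-b) 1 0 = 1 := by
    simp only [disc]; linear_combination (n:ℤ)*h1 + h2
  have hdet2 : δ*(d*(n:ℤ) - 1) - b^2 = d := by linear_combination h1 + d*h2
  have hpos : ∀ x y z : ℤ, ¬(x = 0 ∧ y = 0 ∧ z = 0) → 0 < qf d aa (n:ℤ) (-b) 1 0 x y z := by
    intro x y z hne
    have key := qf_complement d aa (n:ℤ) (-b) 1 0 x y z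
    have hco : d*aa - (-b)^2 = δ := by linear_combination h1
    have hco2 : d*0 - (-b)*1 = b := by ring
    have hco3 : d*(n:ℤ) - 1^2 = d*(n:ℤ) - 1 := by ring
    rw [hco, hco2, hco3] at key
    rcases Classical.em (y = 0 ∧ z = 0) with ⟨hy, hz⟩ | hyz
    · subst hy; subst hz
      have hx : x ≠ 0 := by tauto
      have hb0 : bqf δ b (d*(n:ℤ) - 1) 0 0 = 0 := by simp [bqf]
      rw [hb0] at key
      have hdx : d*x + -b*0 + 1*0 ≠ 0 := by
        simpa using mul_ne_zero hd.ne' hx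
      have := sqpos _ hdx
      nlinarith
    · have hg := bqf_pos δ b (d*(n:ℤ) - 1) y z hδ (by omega) hyz
      nlinarith [sq_nonneg (d*x + -b*y + 1*z)]
  obtain ⟨r, s, t, h⟩ := tern_rep d aa (n:ℤ) (-b) 1 0 hdisc hpos 0 0 1
  refine ⟨r, s, t, ?_⟩
  rw [← h]; simp [qf]


open jacobiSym in
/-- extract a square root of `-D` modulo an odd prime `p` with `J(-D|p) = 1`. -/
lemma sqrt_mod (p : ℕ) (hp : p.Prime) (D : ℕ) (hD : ¬ p ∣ D)
    (hleg : jacobiSym (-(D:ℤ)) p = 1) : ∃ s k : ℤ, (p:ℤ) * k = s^2 + D := by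
  haveI := Fact.mk hp
  have hne : ((-(D:ℤ) : ℤ) : ZMod p) ≠ 0 := by
    push_cast
    rw [neg_ne_zero]
    intro h
    exact hD ((ZMod.natCast_eq_zero_iff D p).mp h)
  have hsq : IsSquare ((-(D:ℤ) : ℤ) : ZMod p) := by
    rw [← legendreSym.to_jacobiSym] at hleg
    exact (legendreSym.eq_one_iff p hne).mp hleg
  obtain ⟨u, hu⟩ := hsq
  have hDu : ((D:ℕ) : ZMod p) = -(u * u) := by
    push_cast at hu
    linear_combination -hu
  refine ⟨(u.val : ℤ), ?_, ?_⟩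
  · exact ((u.val : ℤ)^2 + D) / p
  have hdvd : ((p:ℕ):ℤ) ∣ ((u.val : ℤ)^2 + D) := by
    rw [← ZMod.intCast_zmod_eq_zero_iff_dvd]
    push_cast
    rw [ZMod.natCast_val, ZMod.cast_id, pow_two, hDu]
    ring
  exact Int.mul_ediv_cancel' hdvd

lemma case_two (n : ℕ) (hn : n % 4 = 2) : ∃ r s t : ℤ, (n:ℤ) = r^2 + s^2 + t^2 := by
  obtain ⟨s0, hs0⟩ : ∃ s0, n = 4*s0 + 2 := ⟨n/4, by omega⟩
  haveI : NeZero (4*n) := ⟨by omega⟩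
  have hcop : Nat.Coprime (4*s0+1) (4*n) := by
    have hBez : IsCoprime ((4*s0+1 : ℕ) : ℤ) ((4*n : ℕ) : ℤ) := by
      refine ⟨-(12*(s0:ℤ)+7), (3*(s0:ℤ)+1), ?_⟩
      push_cast [hs0]; ring
    exact Nat.isCoprime_iff_coprime.mp hBez
  have hunit : IsUnit ((4*s0+1 : ℕ) : ZMod (4*n)) := (ZMod.isUnit_iff_coprime _ _).mpr hcop
  obtain ⟨p, hpgt, hpp, hpmod⟩ := Nat.forall_exists_prime_gt_and_eq_mod hunit (4*n)
  have hmod : p % (4*n) = (4*s0+1) % (4*n) := (ZMod.natCast_eq_natCast_iff' _ _ _).mp hpmod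
  have hres : (4*s0+1) % (4*n) = 4*s0+1 := Nat.mod_eq_of_lt (by omega)
  obtain ⟨t, ht0⟩ : ∃ t, p = 4*(n*t) + (4*s0+1) := by
    refine ⟨p / (4*n), ?_⟩
    have hdm := Nat.div_add_mod p (4*n)
    have hre : 4*n*(p/(4*n)) = 4*(n*(p/(4*n))) := by ring
    omega
  have ht1 : 1 ≤ t := by
    rcases Nat.eq_zero_or_pos t with h | h
    · subst h; simp at ht0; omega
    · exact h
  set δ := 4*t+1 with hδdef
  have hnδ : n*δ = 4*(n*t) + n := by rw [hδdef]; ring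
  have hpδ : p + 1 = n * δ := by omega
  have hp4 : p % 4 = 1 := by omega
  haveI := Fact.mk hpp
  have hpodd : Odd p := by rw [Nat.odd_iff]; omega
  have hpdvdδ : ¬ p ∣ δ := by
    intro h
    have h2 : p ∣ n * δ := h.mul_left n
    rw [← hpδ] at h2
    have h3 : p ∣ 1 := (Nat.dvd_add_right dvd_rfl).mp h2
    have h4 : p ≤ 1 := Nat.le_of_dvd one_pos h3
    have := hpp.two_le; omega
  have hδ4 : δ % 4 = 1 := by omega
  have hleg : jacobiSym (-(δ:ℤ)) p = 1 := by
    have hsplit : (-(δ:ℤ)) = (-1) * (δ:ℤ) := by ring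
    rw [hsplit, jacobiSym.mul_left]
    have h1 : jacobiSym (-1) p = 1 := by
      rw [jacobiSym.at_neg_one hpodd, ZMod.χ₄_nat_one_mod_four hp4]
    have h2 : jacobiSym (δ:ℤ) p = 1 := by
      rw [jacobiSym.quadratic_reciprocity_one_mod_four hδ4 hpodd]
      have hc' : ((p:ℕ):ℤ) + 1 = (n:ℤ)*(δ:ℤ) := by exact_mod_cast hpδ
      have hc : ((p:ℕ):ℤ) = -1 + (δ:ℤ)*(n:ℤ) := by linear_combination hc'
      have hδodd : Odd δ := by rw [Nat.odd_iff]; omega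
      rw [jacobiSym.mod_left ((p:ℕ):ℤ), hc, Int.add_mul_emod_self_left, ← jacobiSym.mod_left,
        jacobiSym.at_neg_one hδodd, ZMod.χ₄_nat_one_mod_four hδ4]
    rw [h1, h2]; ring
  obtain ⟨s, k, hsk⟩ := sqrt_mod p hpp δ hpdvdδ hleg
  apply form_rep n ((p:ℕ):ℤ) s ((δ:ℕ):ℤ) k
  · linarith
  · have := hpδ; push_cast at this ⊢; linarith
  · positivity
  · have := hpp.two_le; positivity

lemma case_one (n : ℕ) (hn : n % 4 = 1) : ∃ r s t : ℤ, (n:ℤ) = r^2 + s^2 + t^2 := by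
  obtain ⟨s0, hs0⟩ : ∃ s0, n = 4*s0 + 1 := ⟨n/4, by omega⟩
  haveI : NeZero (8*n) := ⟨by omega⟩
  have hcop : Nat.Coprime (8*s0+1) (8*n) := by
    have hBez : IsCoprime ((8*s0+1 : ℕ) : ℤ) ((8*n : ℕ) : ℤ) := by
      refine ⟨(8*(s0:ℤ)+1), -(2*(s0:ℤ)), ?_⟩
      push_cast [hs0]; ring
    exact Nat.isCoprime_iff_coprime.mp hBez
  have hunit : IsUnit ((8*s0+1 : ℕ) : ZMod (8*n)) := (ZMod.isUnit_iff_coprime _ _).mpr hcop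
  obtain ⟨p, hpgt, hpp, hpmod⟩ := Nat.forall_exists_prime_gt_and_eq_mod hunit (8*n)
  have hmod : p % (8*n) = (8*s0+1) % (8*n) := (ZMod.natCast_eq_natCast_iff' _ _ _).mp hpmod
  have hres : (8*s0+1) % (8*n) = 8*s0+1 := Nat.mod_eq_of_lt (by omega)
  obtain ⟨t, ht0⟩ : ∃ t, p = 8*(n*t) + (8*s0+1) := by
    refine ⟨p / (8*n), ?_⟩
    have hdm := Nat.div_add_mod p (8*n)
    have hre : 8*n*(p/(8*n)) = 8*(n*(p/(8*n))) := by ring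
    omega
  have ht1 : 1 ≤ t := by
    rcases Nat.eq_zero_or_pos t with h | h
    · subst h; simp at ht0; omega
    · exact h
  set e := 4*t+1 with hedef
  set δ := 2*e with hδdef
  have hne : 2*(n*e) = 8*(n*t) + 2*n := by rw [hedef]; ring
  have hnδ : n*δ = 2*(n*e) := by rw [hδdef]; ring
  have hpδ : p + 1 = n * δ := by omega
  have hp8 : p % 8 = 1 := by omega
  have hp4 : p % 4 = 1 := by omega
  have he4 : e % 4 = 1 := by omega
  haveI := Fact.mk hpp
  have hpodd : Odd p := by rw [Nat.odd_iff]; omega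
  have hpdvdδ : ¬ p ∣ δ := by
    intro h
    have h2 : p ∣ n * δ := h.mul_left n
    rw [← hpδ] at h2
    have h3 : p ∣ 1 := (Nat.dvd_add_right dvd_rfl).mp h2
    have h4 : p ≤ 1 := Nat.le_of_dvd one_pos h3
    have := hpp.two_le; omega
  have hleg : jacobiSym (-(δ:ℤ)) p = 1 := by
    have hsplit : (-(δ:ℤ)) = (-1) * 2 * (e:ℤ) := by rw [hδdef]; push_cast; ring
    rw [hsplit, jacobiSym.mul_left, jacobiSym.mul_left]
    have h1 : jacobiSym (-1) p = 1 := by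
      rw [jacobiSym.at_neg_one hpodd, ZMod.χ₄_nat_one_mod_four hp4]
    have h2 : jacobiSym 2 p = 1 := by
      rw [jacobiSym.at_two hpodd, ZMod.χ₈_nat_eq_if_mod_eight]
      norm_num [hp8, show p % 2 = 1 by omega]
    have h3 : jacobiSym (e:ℤ) p = 1 := by
      rw [jacobiSym.quadratic_reciprocity_one_mod_four he4 hpodd]
      have hc' : ((p:ℕ):ℤ) + 1 = 2*(n:ℤ)*(e:ℤ) := by
        have := hpδ
        have h5 : (p:ℤ) + 1 = (n:ℤ)*(δ:ℤ) := by exact_mod_cast this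
        have h6 : (δ:ℤ) = 2*(e:ℤ) := by exact_mod_cast hδdef
        rw [h6] at h5; linear_combination h5
      have hc : ((p:ℕ):ℤ) = -1 + (e:ℤ)*(2*(n:ℤ)) := by linear_combination hc'
      have heodd : Odd e := by rw [Nat.odd_iff]; omega
      rw [jacobiSym.mod_left ((p:ℕ):ℤ), hc, Int.add_mul_emod_self_left, ← jacobiSym.mod_left,
        jacobiSym.at_neg_one heodd, ZMod.χ₄_nat_one_mod_four he4]
    rw [h1, h2, h3]; ring
  obtain ⟨s, k, hsk⟩ := sqrt_mod p hpp δ hpdvdδ hleg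
  apply form_rep n ((p:ℕ):ℤ) s ((δ:ℕ):ℤ) k
  · linarith
  · have := hpδ; push_cast at this ⊢; linarith
  · have : 0 < δ := by omega
    exact_mod_cast this
  · have := hpp.two_le
    have : 0 < p := by omega
    exact_mod_cast this

lemma case_three (n : ℕ) (hn : n % 8 = 3) : ∃ r s t : ℤ, (n:ℤ) = r^2 + s^2 + t^2 := by
  obtain ⟨s0, hs0⟩ : ∃ s0, n = 8*s0 + 3 := ⟨n/8, by omega⟩
  haveI : NeZero (4*n) := ⟨by omega⟩
  have hcop : Nat.Coprime (4*s0+1) (4*n) := by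
    have hBez : IsCoprime ((4*s0+1 : ℕ) : ℤ) ((4*n : ℕ) : ℤ) := by
      refine ⟨(8*(s0:ℤ)+1), -(s0:ℤ), ?_⟩
      push_cast [hs0]; ring
    exact Nat.isCoprime_iff_coprime.mp hBez
  have hunit : IsUnit ((4*s0+1 : ℕ) : ZMod (4*n)) := (ZMod.isUnit_iff_coprime _ _).mpr hcop
  obtain ⟨p, hpgt, hpp, hpmod⟩ := Nat.forall_exists_prime_gt_and_eq_mod hunit (4*n)
  have hmod : p % (4*n) = (4*s0+1) % (4*n) := (ZMod.natCast_eq_natCast_iff' _ _ _).mp hpmod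
  have hres : (4*s0+1) % (4*n) = 4*s0+1 := Nat.mod_eq_of_lt (by omega)
  obtain ⟨t, ht0⟩ : ∃ t, p = 4*(n*t) + (4*s0+1) := by
    refine ⟨p / (4*n), ?_⟩
    have hdm := Nat.div_add_mod p (4*n)
    have hre : 4*n*(p/(4*n)) = 4*(n*(p/(4*n))) := by ring
    omega
  have ht1 : 1 ≤ t := by
    rcases Nat.eq_zero_or_pos t with h | h
    · subst h; simp at ht0; omega
    · exact h
  set δ := 8*t+1 with hδdef
  have hnδ : n*δ = 8*(n*t) + n := by rw [hδdef]; ring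
  have hpδ : 2*p + 1 = n * δ := by omega
  have hp4 : p % 4 = 1 := by omega
  have hδ8 : δ % 8 = 1 := by omega
  have hδ4 : δ % 4 = 1 := by omega
  have hδodd : Odd δ := by rw [Nat.odd_iff]; omega
  haveI := Fact.mk hpp
  have hpodd : Odd p := by rw [Nat.odd_iff]; omega
  have hpdvdδ : ¬ p ∣ δ := by
    intro h
    have h2 : p ∣ n * δ := h.mul_left n
    rw [← hpδ] at h2
    have h2' : p ∣ 2*p + 1 := h2
    have h3 : p ∣ 1 := (Nat.dvd_add_right (Dvd.dvd.mul_left dvd_rfl 2)).mp h2'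
    have h4 : p ≤ 1 := Nat.le_of_dvd one_pos h3
    have := hpp.two_le; omega
  have hc' : 2*((p:ℕ):ℤ) + 1 = (n:ℤ)*(δ:ℤ) := by exact_mod_cast hpδ
  have hleg : jacobiSym (-(δ:ℤ)) p = 1 := by
    have hsplit : (-(δ:ℤ)) = (-1) * (δ:ℤ) := by ring
    rw [hsplit, jacobiSym.mul_left]
    have h1 : jacobiSym (-1) p = 1 := by
      rw [jacobiSym.at_neg_one hpodd, ZMod.χ₄_nat_one_mod_four hp4]
    have h2 : jacobiSym (δ:ℤ) p = 1 := by
      rw [jacobiSym.quadratic_reciprocity_one_mod_four hδ4 hpodd]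
      have hJ2p : jacobiSym (2*((p:ℕ):ℤ)) δ = 1 := by
        have hc : (2*((p:ℕ):ℤ)) = -1 + (δ:ℤ)*(n:ℤ) := by linear_combination hc'
        rw [jacobiSym.mod_left (2*((p:ℕ):ℤ)), hc, Int.add_mul_emod_self_left,
          ← jacobiSym.mod_left, jacobiSym.at_neg_one hδodd, ZMod.χ₄_nat_one_mod_four hδ4]
      have h2δ : jacobiSym 2 δ = 1 := by
        rw [jacobiSym.at_two hδodd, ZMod.χ₈_nat_eq_if_mod_eight]
        norm_num [hδ8, show δ % 2 = 1 by omega]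
      have hml := jacobiSym.mul_left 2 ((p:ℕ):ℤ) δ
      rw [h2δ, one_mul] at hml
      rw [← hml]
      exact hJ2p
    rw [h1, h2]; ring
  obtain ⟨s, k0, hsk⟩ := sqrt_mod p hpp δ hpdvdδ hleg
  -- make the square root odd
  obtain ⟨w, hw⟩ : ∃ w, (p:ℤ) = 2*w + 1 := by
    refine ⟨(p-1)/2, ?_⟩
    have : p % 2 = 1 := by omega
    push_cast
    omega
  set s' : ℤ := if s % 2 = 0 then s + p else s with hs'def
  have hs'odd : s' % 2 = 1 := by
    rcases Int.emod_two_eq_zero_or_one s with h | h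
    · rw [hs'def, if_pos h]; omega
    · rw [hs'def, if_neg (by omega)]; exact h
  have hpdvd : (p:ℤ) ∣ s'^2 + δ := by
    rcases Int.emod_two_eq_zero_or_one s with h | h
    · rw [hs'def, if_pos h]
      refine ⟨k0 + 2*s + p, ?_⟩
      push_cast
      have hδc : ((δ:ℕ):ℤ) = 8*(t:ℤ)+1 := by exact_mod_cast hδdef
      linear_combination -hsk
    · rw [hs'def, if_neg (by omega)]
      exact ⟨k0, by linarith⟩
  have h2dvd : (2:ℤ) ∣ s'^2 + δ := by
    obtain ⟨m, hm⟩ : ∃ m, s' = 2*m + 1 := ⟨(s'-1)/2, by omega⟩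
    refine ⟨2*m^2 + 2*m + 4*t + 1, ?_⟩
    rw [hm, hδdef]
    push_cast
    ring
  have hcop2p : IsCoprime (2:ℤ) ((p:ℕ):ℤ) := ⟨-w, 1, by rw [hw]; ring⟩
  obtain ⟨k, hk⟩ := IsCoprime.mul_dvd hcop2p h2dvd hpdvd
  apply form_rep n (2*((p:ℕ):ℤ)) s' ((δ:ℕ):ℤ) k
  · linarith
  · linarith
  · have : 0 < δ := by omega
    exact_mod_cast this
  · have := hpp.two_le
    have h0 : (0:ℤ) < ((p:ℕ):ℤ) := by exact_mod_cast Nat.pos_of_ne_zero (by omega)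
    linarith

lemma sum3_nat : ∀ (n : ℕ), (∀ l k : ℕ, (n:ℤ) ≠ 4^l * (8*(k:ℤ)+7)) →
    ∃ r s t : ℤ, (n:ℤ) = r^2 + s^2 + t^2 := by
  intro n
  induction n using Nat.strong_induction_on with
  | _ n ih =>
    intro hform
    rcases Nat.eq_zero_or_pos n with h0 | h0
    · exact ⟨0, 0, 0, by simp [h0]⟩
    by_cases h4 : n % 4 = 0
    · obtain ⟨m, hm⟩ : ∃ m, n = 4*m := ⟨n/4, by omega⟩
      have hm4 : m < n := by omega
      have hform' : ∀ l k : ℕ, (m:ℤ) ≠ 4^l * (8*(k:ℤ)+7) := by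
        intro l k hk
        apply hform (l+1) k
        have : (n:ℤ) = 4*(m:ℤ) := by exact_mod_cast hm
        rw [this, hk, pow_succ]; ring
      obtain ⟨r, s, t, h⟩ := ih m hm4 hform'
      refine ⟨2*r, 2*s, 2*t, ?_⟩
      have : (n:ℤ) = 4*(m:ℤ) := by exact_mod_cast hm
      rw [this, h]; ring
    · have h8 : n % 8 ≠ 7 := by
        intro h7
        apply hform 0 (n/8)
        have : (n:ℤ) = 8*((n/8 : ℕ):ℤ) + 7 := by
          have h1 : n = 8*(n/8) + 7 := by omega
          exact_mod_cast h1
        rw [this, pow_zero]; ring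
      rcases (show n % 4 = 1 ∨ n % 4 = 2 ∨ n % 4 = 3 by omega) with h | h | h
      · exact case_one n h
      · exact case_two n h
      · exact case_three n (by omega)

lemma sum3_int (N : ℤ) (h0 : 0 ≤ N) (hform : ∀ l k : ℕ, N ≠ 4^l * (8*(k:ℤ)+7)) :
    ∃ r s t : ℤ, N = r^2 + s^2 + t^2 := by
  have hN : ((N.toNat : ℕ) : ℤ) = N := Int.toNat_of_nonneg h0
  obtain ⟨r, s, t, h⟩ := sum3_nat N.toNat (by rw [hN]; exact hform)
  exact ⟨r, s, t, by rw [← hN, h]⟩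



notation "f42" => ZMod.castHom (show (2:ℕ) ∣ 4 by norm_num) (ZMod 2)

lemma parity_adjust : ∀ x y z w : ZMod 4, x^2+y^2+z^2 = 2*w - w^2 →
    ((f42 x = f42 w ∧ f42 y = 0 ∧ f42 z = 0) ∨
     (f42 y = f42 w ∧ f42 x = 0 ∧ f42 z = 0) ∨
     (f42 z = f42 w ∧ f42 x = 0 ∧ f42 y = 0)) := by decide

lemma sign_adjust : ∀ x y z w : ZMod 3, x^2+y^2+z^2 = 2*w^2 →
    ∃ e1 e2 e3 : Bool, (cond e2 y (-y)) = (cond e1 x (-x)) + w ∧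
      (cond e3 z (-z)) = (cond e1 x (-x)) - w := by decide

lemma two_poly (m x : ℤ) : 2 * polygonal m x = (m-2)*x^2 - (m-4)*x := by
  obtain ⟨u, hu⟩ : Even ((x-1)*(x-1+1)) := Int.even_mul_succ_self (x-1)
  have h : (m-2)*x^2 - (m-4)*x = 2*((m-2)*u + x) := by linear_combination (m-2)*hu
  unfold polygonal
  exact Int.mul_ediv_cancel' ⟨(m-2)*u + x, h⟩

theorem rep_1122 (m : ℤ) (hm : 3 ≤ m) (A B : ℤ) (hA : 0 ≤ A)
    (hd : 0 ≤ 12 * A + 6 * B - B ^ 2)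
    (hform : ∀ l k : ℕ, 12 * A + 6 * B - B ^ 2 ≠ (4 : ℤ) ^ l * (8 * (k : ℤ) + 7)) :
    ∃ x₁ x₂ x₃ x₄ : ℤ,
      polygonal m x₁ + polygonal m x₂ + 2 * polygonal m x₃ + 2 * polygonal m x₄ =
        A * (m - 2) + B := by
  obtain ⟨a, b, c, hN⟩ := sum3_int (12*A + 6*B - B^2) hd hform
  -- Step 1: permute so that a ≡ B, b ≡ 0, c ≡ 0 (mod 2)
  obtain ⟨a1, b1, c1, hsum1, h2a, h2b, h2c⟩ :
      ∃ a1 b1 c1 : ℤ, a1^2 + b1^2 + c1^2 = 12*A + 6*B - B^2 ∧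
        (2:ℤ) ∣ a1 - B ∧ (2:ℤ) ∣ b1 ∧ (2:ℤ) ∣ c1 := by
    have h4 : ((a : ZMod 4))^2 + (b : ZMod 4)^2 + (c : ZMod 4)^2
        = 2*(B : ZMod 4) - (B : ZMod 4)^2 := by
      have hc := congrArg (fun z : ℤ => (z : ZMod 4)) hN.symm
      push_cast at hc
      rw [hc]
      have h40 : (4 : ZMod 4) = 0 := by decide
      linear_combination (3*(A : ZMod 4) + (B : ZMod 4)) * h40
    have getdvd : ∀ x : ℤ, f42 ((x : ℤ) : ZMod 4) = 0 → (2:ℤ) ∣ x := by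
      intro x hx
      rw [map_intCast] at hx
      exact_mod_cast (ZMod.intCast_zmod_eq_zero_iff_dvd x 2).mp hx
    have getcong : ∀ x : ℤ, f42 ((x : ℤ) : ZMod 4) = f42 ((B : ℤ) : ZMod 4) → (2:ℤ) ∣ x - B := by
      intro x hx
      rw [map_intCast, map_intCast] at hx
      have : ((x - B : ℤ) : ZMod 2) = 0 := by push_cast; rw [hx]; ring
      exact_mod_cast (ZMod.intCast_zmod_eq_zero_iff_dvd _ 2).mp this
    rcases parity_adjust _ _ _ _ h4 with ⟨u1, u2, u3⟩ | ⟨u1, u2, u3⟩ | ⟨u1, u2, u3⟩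
    · exact ⟨a, b, c, by linarith, getcong a u1, getdvd b u2, getdvd c u3⟩
    · exact ⟨b, a, c, by linarith, getcong b u1, getdvd a u2, getdvd c u3⟩
    · exact ⟨c, a, b, by linarith, getcong c u1, getdvd a u2, getdvd b u3⟩
  -- Step 2: flip signs so that b2 ≡ a2 + B, c2 ≡ a2 - B (mod 3)
  obtain ⟨a2, b2, c2, hsum2, k2a, k2b, k2c, k3b, k3c⟩ :
      ∃ a2 b2 c2 : ℤ, a2^2 + b2^2 + c2^2 = 12*A + 6*B - B^2 ∧
        (2:ℤ) ∣ a2 - B ∧ (2:ℤ) ∣ b2 ∧ (2:ℤ) ∣ c2 ∧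
        (3:ℤ) ∣ b2 - a2 - B ∧ (3:ℤ) ∣ c2 - a2 + B := by
    have h3 : ((a1 : ZMod 3))^2 + (b1 : ZMod 3)^2 + (c1 : ZMod 3)^2 = 2*(B : ZMod 3)^2 := by
      have hc := congrArg (fun z : ℤ => (z : ZMod 3)) hsum1
      push_cast at hc
      rw [hc]
      have h30 : (3 : ZMod 3) = 0 := by decide
      linear_combination (4*(A : ZMod 3) + 2*(B : ZMod 3) - (B : ZMod 3)^2) * h30
    obtain ⟨e1, e2, e3, hh1, hh2⟩ := sign_adjust _ _ _ _ h3
    refine ⟨cond e1 a1 (-a1), cond e2 b1 (-b1), cond e3 c1 (-c1), ?_, ?_, ?_, ?_, ?_, ?_⟩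
    · cases e1 <;> cases e2 <;> cases e3 <;> simp only [cond_true, cond_false] <;>
        linear_combination hsum1
    · cases e1 <;> simp only [cond_true, cond_false] <;> omega
    · cases e2 <;> simp only [cond_true, cond_false] <;> omega
    · cases e3 <;> simp only [cond_true, cond_false] <;> omega
    · have : (((cond e2 b1 (-b1) : ℤ) - (cond e1 a1 (-a1)) - B : ℤ) : ZMod 3) = 0 := by
        push_cast
        have c2' : (((cond e2 b1 (-b1) : ℤ)) : ZMod 3) = cond e2 (b1 : ZMod 3) (-(b1 : ZMod 3)) := by
          cases e2 <;> simp
        have c1' : (((cond e1 a1 (-a1) : ℤ)) : ZMod 3) = cond e1 (a1 : ZMod 3) (-(a1 : ZMod 3)) := by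
          cases e1 <;> simp
        rw [c2', c1', hh1]; ring
      exact_mod_cast (ZMod.intCast_zmod_eq_zero_iff_dvd _ 3).mp this
    · have : (((cond e3 c1 (-c1) : ℤ) - (cond e1 a1 (-a1)) + B : ℤ) : ZMod 3) = 0 := by
        push_cast
        have c3' : (((cond e3 c1 (-c1) : ℤ)) : ZMod 3) = cond e3 (c1 : ZMod 3) (-(c1 : ZMod 3)) := by
          cases e3 <;> simp
        have c1' : (((cond e1 a1 (-a1) : ℤ)) : ZMod 3) = cond e1 (a1 : ZMod 3) (-(a1 : ZMod 3)) := by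
          cases e1 <;> simp
        rw [c3', c1', hh2]; ring
      exact_mod_cast (ZMod.intCast_zmod_eq_zero_iff_dvd _ 3).mp this
  -- Step 3: define the xᵢ
  obtain ⟨x1, hx1⟩ : ∃ x1, B - a2 - 2*c2 = 6*x1 := by
    have : (6:ℤ) ∣ B - a2 - 2*c2 := by omega
    exact this
  obtain ⟨x2, hx2⟩ : ∃ x2, a2 + 2*b2 + B = 6*x2 := by
    have : (6:ℤ) ∣ a2 + 2*b2 + B := by omega
    exact this
  obtain ⟨x3, hx3⟩ : ∃ x3, c2 - a2 + B = 6*x3 := by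
    have : (6:ℤ) ∣ c2 - a2 + B := by omega
    exact this
  obtain ⟨x4, hx4⟩ : ∃ x4, a2 - b2 + B = 6*x4 := by
    have : (6:ℤ) ∣ a2 - b2 + B := by omega
    exact this
  refine ⟨x1, x2, x3, x4, ?_⟩
  have hL : x1 + x2 + 2*x3 + 2*x4 = B := by linarith
  have hx1sq : (B - a2 - 2*c2)^2 = 36*x1^2 := by rw [hx1]; ring
  have hx2sq : (a2 + 2*b2 + B)^2 = 36*x2^2 := by rw [hx2]; ring
  have hx3sq : (c2 - a2 + B)^2 = 36*x3^2 := by rw [hx3]; ring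
  have hx4sq : (a2 - b2 + B)^2 = 36*x4^2 := by rw [hx4]; ring
  have h36 : 36*(x1^2 + x2^2 + 2*x3^2 + 2*x4^2) = 36*(2*A + B) := by
    linear_combination -hx1sq - hx2sq - 2*hx3sq - 2*hx4sq + 6*hsum2
  have hS : x1^2 + x2^2 + 2*x3^2 + 2*x4^2 = 2*A + B := by linarith
  have e1 := two_poly m x1
  have e2 := two_poly m x2
  have e3 := two_poly m x3
  have e4 := two_poly m x4
  have hdouble : 2*(polygonal m x1 + polygonal m x2 + 2*polygonal m x3 + 2*polygonal m x4)
      = 2*(A*(m-2) + B) := by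
    linear_combination e1 + e2 + 2*e3 + 2*e4 + (m-2)*hS - (m-4)*hL
  linarith
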